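/- arXiv:1302.3992 — 4 statements merged into one kernel-verified Lean document; each statement's English description precedes it below -/
import Mathlib

section
/- Let A be an associative algebra over a field of characteristic zero, Mₖ the two-sided ideal generated by the k-th lower central series term Lₖ. Then [A,[A,Mₖ]] ⊆ Mₖ₊₁, assuming the containment MᵢMⱼ ⊆ M_{i+j−1} for odd i (in particular M₃Mₖ ⊆ M_{k+2} and M₂M₂ ⊆ M₃). -/
open Submodule

variable (K : Type*) (A : Type*)

/-- Lower central series Lie ideals: L₁ = A, Lₖ = [A, Lₖ₋₁]. -/
def lcs [CommRing K] [Ring A] [Algebra K A] : ℕ → Submodule K A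
  | 0 => ⊤
  | 1 => ⊤
  | (k+2) => Submodule.span K {x : A | ∃ a : A, ∃ l ∈ lcs (k+1), x = a * l - l * a}

/-- Lower central series two-sided ideals Mₖ = A·Lₖ·A. -/
def lcsM [CommRing K] [Ring A] [Algebra K A] (k : ℕ) : Submodule K A :=
  Submodule.span K {x : A | ∃ p q : A, ∃ l ∈ lcs K A k, x = p * l * q}

section Aux

variable {K A : Type*} [CommRing K] [Ring A] [Algebra K A]

lemma lcs_comm_mem (n : ℕ) (c : A) {l : A} (hl : l ∈ lcs K A (n + 1)) :
    c * l - l * c ∈ lcs K A (n + 2) := by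
  apply Submodule.subset_span
  exact ⟨c, l, hl, rfl⟩

lemma lcs_succ_le (n : ℕ) : lcs K A (n + 2) ≤ lcs K A (n + 1) := by
  induction n with
  | zero => exact le_top
  | succ m ih =>
      show Submodule.span K _ ≤ _
      rw [Submodule.span_le]
      rintro x ⟨c, l, hl, rfl⟩
      exact lcs_comm_mem m c (ih hl)

lemma lcsM_gen_mem (n : ℕ) (p q : A) {l : A} (hl : l ∈ lcs K A n) :
    p * l * q ∈ lcsM K A n :=
  Submodule.subset_span ⟨p, q, l, hl, rfl⟩

lemma lcs_mem_lcsM (n : ℕ) {l : A} (hl : l ∈ lcs K A n) : l ∈ lcsM K A n := by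
  have := lcsM_gen_mem n (1 : A) (1 : A) hl
  simpa using this

lemma lcsM_mul_left (n : ℕ) (r : A) {x : A} (hx : x ∈ lcsM K A n) :
    r * x ∈ lcsM K A n := by
  induction hx using Submodule.span_induction with
  | mem y hy =>
      obtain ⟨p, q, l, hl, rfl⟩ := hy
      have : r * (p * l * q) = (r * p) * l * q := by noncomm_ring
      rw [this]
      exact lcsM_gen_mem n _ _ hl
  | zero => simpa using Submodule.zero_mem _
  | add y z _ _ hy hz => simpa [mul_add] using Submodule.add_mem _ hy hz
  | smul c y _ hy => simpa [mul_smul_comm] using Submodule.smul_mem _ c hy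

lemma lcsM_mul_right (n : ℕ) (r : A) {x : A} (hx : x ∈ lcsM K A n) :
    x * r ∈ lcsM K A n := by
  induction hx using Submodule.span_induction with
  | mem y hy =>
      obtain ⟨p, q, l, hl, rfl⟩ := hy
      have : (p * l * q) * r = p * l * (q * r) := by noncomm_ring
      rw [this]
      exact lcsM_gen_mem n _ _ hl
  | zero => simpa using Submodule.zero_mem _
  | add y z _ _ hy hz => simpa [add_mul] using Submodule.add_mem _ hy hz
  | smul c y _ hy => simpa [smul_mul_assoc] using Submodule.smul_mem _ c hy

lemma lcsM_comm_mem (n : ℕ) (r : A) {x : A} (hx : x ∈ lcsM K A n) :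
    r * x - x * r ∈ lcsM K A n :=
  Submodule.sub_mem _ (lcsM_mul_left n r hx) (lcsM_mul_right n r hx)

lemma lcsM_succ_le (n : ℕ) : lcsM K A (n + 2) ≤ lcsM K A (n + 1) := by
  rw [lcsM, Submodule.span_le]
  rintro x ⟨p, q, l, hl, rfl⟩
  exact lcsM_gen_mem (n + 1) p q (lcs_succ_le n hl)

end Aux

/-- assuming `MᵢMⱼ ⊆ M_{i+j−1}` for odd `i`, we have `[A,[A,Mₖ]] ⊆ Mₖ₊₁`. -/
theorem stmt5 {K A : Type*} [Field K] [CharZero K] [Ring A] [Algebra K A]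
    (h : ∀ i j : ℕ, Odd i → ∀ x ∈ lcsM K A i, ∀ y ∈ lcsM K A j, x * y ∈ lcsM K A (i + j - 1))
    (k : ℕ) (hk : 1 ≤ k) (a b m : A) (hm : m ∈ lcsM K A k) :
    a * (b * m - m * b) - (b * m - m * b) * a ∈ lcsM K A (k + 1) := by
  obtain ⟨k', rfl⟩ : ∃ k', k = k' + 1 := ⟨k - 1, by omega⟩
  induction hm using Submodule.span_induction with
  | mem m hmem =>
      obtain ⟨p, q, l, hl, rfl⟩ := hmem
      -- pieces
      set p' := p * q with hp'
      -- t1 : inner bracket applied to p * (l*q - q*l) ∈ M_{k+2}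
      have hlq : l * q - q * l ∈ lcs K A (k' + 2) := by
        have := Submodule.neg_mem _ (lcs_comm_mem (K := K) k' q hl)
        simpa [neg_sub] using this
      have hx1 : p * (l * q - q * l) ∈ lcsM K A (k' + 2) := by
        have := lcsM_gen_mem (K := K) (k' + 2) p (1 : A) hlq
        simpa using this
      have t1mem :
          a * (b * (p * (l * q - q * l)) - (p * (l * q - q * l)) * b) -
            (b * (p * (l * q - q * l)) - (p * (l * q - q * l)) * b) * a
            ∈ lcsM K A (k' + 2) := by
        apply lcsM_comm_mem
        apply lcsM_comm_mem
        exact hx1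
      -- t2 : [a, p' * (b*l - l*b)]
      have hbl : b * l - l * b ∈ lcs K A (k' + 2) := lcs_comm_mem k' b hl
      have hx2 : p' * (b * l - l * b) ∈ lcsM K A (k' + 2) := by
        have := lcsM_gen_mem (K := K) (k' + 2) p' (1 : A) hbl
        simpa using this
      have t2mem :
          a * (p' * (b * l - l * b)) - (p' * (b * l - l * b)) * a
            ∈ lcsM K A (k' + 2) := lcsM_comm_mem _ a hx2
      -- t3 : [a,[b,p']] * l ∈ M₃ · M_k ⊆ M_{k+2}
      have hu2 : b * p' - p' * b ∈ lcs K A 2 := lcs_comm_mem 0 b (by trivial)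
      have hw3 : a * (b * p' - p' * b) - (b * p' - p' * b) * a ∈ lcs K A 3 :=
        lcs_comm_mem 1 a hu2
      have t3mem :
          (a * (b * p' - p' * b) - (b * p' - p' * b) * a) * l
            ∈ lcsM K A (k' + 3) := by
        have hh := h 3 (k' + 1) (by decide)
          _ (lcs_mem_lcsM 3 hw3) _ (lcs_mem_lcsM (k' + 1) hl)
        have : 3 + (k' + 1) - 1 = k' + 3 := by omega
        rwa [this] at hh
      have t3mem' :
          (a * (b * p' - p' * b) - (b * p' - p' * b) * a) * l
            ∈ lcsM K A (k' + 2) := lcsM_succ_le (k' + 1) t3mem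
      -- t4 : [b,p'] * [a,l]
      have hal : a * l - l * a ∈ lcs K A (k' + 2) := lcs_comm_mem k' a hl
      have t4mem : (b * p' - p' * b) * (a * l - l * a) ∈ lcsM K A (k' + 2) := by
        have := lcsM_gen_mem (K := K) (k' + 2) (b * p' - p' * b) (1 : A) hal
        simpa using this
      -- combine
      have key :
          a * (b * (p * l * q) - (p * l * q) * b) - (b * (p * l * q) - (p * l * q) * b) * a =
            (a * (b * (p * (l * q - q * l)) - (p * (l * q - q * l)) * b) -
              (b * (p * (l * q - q * l)) - (p * (l * q - q * l)) * b) * a) +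
            (a * (p' * (b * l - l * b)) - (p' * (b * l - l * b)) * a) +
            ((a * (b * p' - p' * b) - (b * p' - p' * b) * a) * l) +
            ((b * p' - p' * b) * (a * l - l * a)) := by
        rw [hp']; noncomm_ring
      rw [key]
      exact add_mem (add_mem (add_mem t1mem t2mem) t3mem') t4mem
  | zero => simpa using Submodule.zero_mem _
  | add y z _ _ hy hz =>
      have := Submodule.add_mem _ hy hz
      have e : a * (b * (y + z) - (y + z) * b) - (b * (y + z) - (y + z) * b) * a =
          (a * (b * y - y * b) - (b * y - y * b) * a) +
          (a * (b * z - z * b) - (b * z - z * b) * a) := by noncomm_ring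
      rw [e]; exact Submodule.add_mem _ hy hz
  | smul c y _ hy =>
      have e : a * (b * (c • y) - (c • y) * b) - (b * (c • y) - (c • y) * b) * a =
          c • (a * (b * y - y * b) - (b * y - y * b) * a) := by
        simp [mul_smul_comm, smul_mul_assoc, ← smul_sub]
      rw [e]; exact Submodule.smul_mem _ c hy
end

section
/- Let A be an associative algebra over a field of characteristic zero, Mₖ the lower central series ideals. Assume M₃Mₖ ⊆ M_{k+2} and [A,[A,Mₖ]] ⊆ Mₖ₊₁. Then the action a⋆n := (an+na)/2 makes Nₖ := Mₖ/Mₖ₊₁ a module over the commutative algebra A⋆ := (A/M₃, ⋆); in particular (a⋆b)⋆n − a⋆(b⋆n) ∈ Mₖ₊₁ for all a,b ∈ A, n ∈ Mₖ. -/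
open Submodule

variable (K : Type*) (A : Type*)

/-- The symmetrized (star) product `a⋆b = (ab+ba)/2`. -/
def starP (K : Type*) {A : Type*} [Field K] [Ring A] [Algebra K A] (a b : A) : A :=
  (1/2 : K) • (a * b + b * a)

lemma lcsM_mul_left_s7 {K A : Type*} [CommRing K] [Ring A] [Algebra K A] (k : ℕ)
    (a : A) {n : A} (hn : n ∈ lcsM K A k) : a * n ∈ lcsM K A k := by
  induction hn using Submodule.span_induction with
  | mem x hx =>
      obtain ⟨p, q, l, hl, rfl⟩ := hx
      exact Submodule.subset_span ⟨a * p, q, l, hl, by simp [mul_assoc]⟩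
  | zero => simp
  | add x y _ _ hx hy => rw [mul_add]; exact add_mem hx hy
  | smul c x _ hx => rw [mul_smul_comm]; exact Submodule.smul_mem _ _ hx

lemma lcsM_mul_right_s7 {K A : Type*} [CommRing K] [Ring A] [Algebra K A] (k : ℕ)
    (a : A) {n : A} (hn : n ∈ lcsM K A k) : n * a ∈ lcsM K A k := by
  induction hn using Submodule.span_induction with
  | mem x hx =>
      obtain ⟨p, q, l, hl, rfl⟩ := hx
      exact Submodule.subset_span ⟨p, q * a, l, hl, by simp [mul_assoc]⟩
  | zero => simp
  | add x y _ _ hx hy => rw [add_mul]; exact add_mem hx hy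
  | smul c x _ hx => rw [smul_mul_assoc]; exact Submodule.smul_mem _ _ hx

/-- assuming `M₃Mₖ ⊆ M_{k+2}` and `[A,[A,Mₖ]] ⊆ Mₖ₊₁`, the star action
`a⋆n = (an+na)/2` makes `Nₖ = Mₖ/Mₖ₊₁` a module over `A⋆ = (A/M₃,⋆)`; in particular
`(a⋆b)⋆n − a⋆(b⋆n) ∈ Mₖ₊₁` for `n ∈ Mₖ`. -/
theorem stmt7 {K A : Type*} [Field K] [CharZero K] [Ring A] [Algebra K A] (k : ℕ)
    (h1 : ∀ x ∈ lcsM K A 3, ∀ n ∈ lcsM K A k, x * n ∈ lcsM K A (k + 2))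
    (h2 : ∀ a b : A, ∀ n ∈ lcsM K A k,
        a * (b * n - n * b) - (b * n - n * b) * a ∈ lcsM K A (k + 1)) :
    (∀ a : A, ∀ n ∈ lcsM K A k, starP K a n ∈ lcsM K A k)
    ∧ (∀ a b : A, ∀ n ∈ lcsM K A k,
        starP K (starP K a b) n - starP K a (starP K b n) ∈ lcsM K A (k + 1)) := by
  constructor
  · intro a n hn
    exact Submodule.smul_mem _ _ (add_mem (lcsM_mul_left_s7 k a hn) (lcsM_mul_right_s7 k a hn))
  · intro a b n hn
    have key := h2 b a n hn
    have heq : starP K (starP K a b) n - starP K a (starP K b n)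
        = ((1:K)/4) • (b * (a * n - n * a) - (a * n - n * a) * b) := by
      simp only [starP, smul_add, smul_sub, smul_smul, mul_smul_comm, smul_mul_assoc,
        mul_add, add_mul, mul_sub, sub_mul, mul_assoc]
      norm_num
      module
    rw [heq]
    exact Submodule.smul_mem _ _ key
end

section
/- Let A be an associative algebra over a field of characteristic zero satisfying the containments MᵢMⱼ ⊆ M_{i+j−1} for odd i and [A,[A,Mₖ]] ⊆ Mₖ₊₁. Then for all a, b, d ∈ A and m ∈ Mₖ, the element [b,d][a,m] + [a,d][b,m] lies in M_{k+2}. -/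
open Submodule

variable (K : Type*) (A : Type*)

section St11Helpers

variable {R B : Type*} [CommRing R] [Ring B] [Algebra R B]

lemma st11_mem_lcs_succ : ∀ {j : ℕ} {l : B}, l ∈ lcs R B j → ∀ u : B,
    u * l - l * u ∈ lcs R B (j + 1)
  | 0, _, _, _ => Submodule.mem_top
  | (_+1), l, hl, u => Submodule.subset_span ⟨u, l, hl, rfl⟩

lemma st11_mem_lcsM_of {j : ℕ} {l : B} (hl : l ∈ lcs R B j) (p q : B) :
    p * l * q ∈ lcsM R B j :=
  Submodule.subset_span ⟨p, q, l, hl, rfl⟩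

lemma st11_mem_lcsM_of' {j : ℕ} {l : B} (hl : l ∈ lcs R B j) : l ∈ lcsM R B j := by
  simpa using st11_mem_lcsM_of hl 1 1

lemma st11_comm_mem_lcs2 (u v : B) : u * v - v * u ∈ lcs R B 2 :=
  Submodule.subset_span ⟨u, v, Submodule.mem_top, rfl⟩

lemma st11_comm3_mem_lcs3 (u v w : B) :
    u * (v * w - w * v) - (v * w - w * v) * u ∈ lcs R B 3 :=
  Submodule.subset_span ⟨u, v * w - w * v, st11_comm_mem_lcs2 v w, rfl⟩

lemma st11_lcsM_mul_right {j : ℕ} {x : B} (hx : x ∈ lcsM R B j) (y : B) :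
    x * y ∈ lcsM R B j := by
  have hx' : x ∈ Submodule.span R {x : B | ∃ p q : B, ∃ l ∈ lcs R B j, x = p * l * q} := hx
  clear hx
  induction hx' using Submodule.span_induction with
  | mem z hz =>
    obtain ⟨p, q, l, hl, rfl⟩ := hz
    have h := st11_mem_lcsM_of hl p (q * y)
    have e : p * l * (q * y) = p * l * q * y := by noncomm_ring
    rwa [e] at h
  | zero => simp
  | add x y hx hy ihx ihy =>
    rw [add_mul]; exact Submodule.add_mem _ ihx ihy
  | smul r x hx ih =>
    rw [smul_mul_assoc]; exact Submodule.smul_mem _ r ih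

/-- The core lemma: for `l ∈ L_{k₂+2}`,
`[a,l][b,d] + [b,l][a,d] ∈ M_{k₂+4}`, purely from the Lie filtration. -/
lemma st11_core {k₂ : ℕ} (a b d : B) {l : B} (hl : l ∈ lcs R B (k₂ + 2)) :
    (a * l - l * a) * (b * d - d * b) + (b * l - l * b) * (a * d - d * a)
      ∈ lcsM R B (k₂ + 2 + 2) := by
  have hl' : l ∈ Submodule.span R
      {x : B | ∃ c : B, ∃ L ∈ lcs R B (k₂ + 1), x = c * L - L * c} := hl
  clear hl
  induction hl' using Submodule.span_induction with
  | mem z hz =>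
    obtain ⟨c, L, hL, rfl⟩ := hz
    have h4 : ∀ u v w x y : B,
        x * (w * (v * (u * L - L * u) - (u * L - L * u) * v)
          - (v * (u * L - L * u) - (u * L - L * u) * v) * w) * y
          ∈ lcsM R B (k₂ + 2 + 2) := fun u v w x y =>
      st11_mem_lcsM_of (st11_mem_lcs_succ (st11_mem_lcs_succ (st11_mem_lcs_succ hL u) v) w) x y
    have HS := add_mem (sub_mem (sub_mem (add_mem (sub_mem (sub_mem (add_mem (sub_mem
      (add_mem (neg_mem (h4 c b a 1 d)) (h4 d c (a*b) 1 1)) (h4 d c b a 1))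
      (h4 c (b*d) a 1 1)) (h4 c d (a*b) 1 1)) (h4 c a b 1 d)) (h4 (c*d) a b 1 1))
      (h4 d c a b 1)) (h4 (d*c) a b 1 1)) (h4 c (a*d) b 1 1)
    have E : (a * (c * L - L * c) - (c * L - L * c) * a) * (b * d - d * b) + (b * (c * L - L * c) - (c * L - L * c) * b) * (a * d - d * a) = -(1 * (a * (b * (c * L - L * c) - (c * L - L * c) * b) - (b * (c * L - L * c) - (c * L - L * c) * b) * a) * d) + 1 * ((a * b) * (c * (d * L - L * d) - (d * L - L * d) * c) - (c * (d * L - L * d) - (d * L - L * d) * c) * (a * b)) * 1 - a * (b * (c * (d * L - L * d) - (d * L - L * d) * c) - (c * (d * L - L * d) - (d * L - L * d) * c) * b) * 1 + 1 * (a * ((b * d) * (c * L - L * c) - (c * L - L * c) * (b * d)) - ((b * d) * (c * L - L * c) - (c * L - L * c) * (b * d)) * a) * 1 - 1 * ((a * b) * (d * (c * L - L * c) - (c * L - L * c) * d) - (d * (c * L - L * c) - (c * L - L * c) * d) * (a * b)) * 1 - 1 * (b * (a * (c * L - L * c) - (c * L - L * c) * a) - (a * (c * L - L * c) - (c * L -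 L * c) * a) * b) * d + 1 * (b * (a * ((c * d) * L - L * (c * d)) - ((c * d) * L - L * (c * d)) * a) - (a * ((c * d) * L - L * (c * d)) - ((c * d) * L - L * (c * d)) * a) * b) * 1 - b * (a * (c * (d * L - L * d) - (d * L - L * d) * c) - (c * (d * L - L * d) - (d * L - L * d) * c) * a) * 1 - 1 * (b * (a * ((d * c) * L - L * (d * c)) - ((d * c) * L - L * (d * c)) * a) - (a * ((d * c) * L - L * (d * c)) - ((d * c) * L - L * (d * c)) * a) * b) * 1 + 1 * (b * ((a * d) * (c * L - L * c) - (c * L - L * c) * (a * d)) - ((a * d) * (c * L - L * c) - (c * L - L * c) * (a * d)) * b) * 1 := by noncomm_ring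
    rw [E]
    exact HS
  | zero => simp
  | add x y hx hy ihx ihy =>
    have E : (a * (x + y) - (x + y) * a) * (b * d - d * b)
        + (b * (x + y) - (x + y) * b) * (a * d - d * a)
        = ((a * x - x * a) * (b * d - d * b) + (b * x - x * b) * (a * d - d * a))
        + ((a * y - y * a) * (b * d - d * b) + (b * y - y * b) * (a * d - d * a)) := by
      noncomm_ring
    rw [E]; exact Submodule.add_mem _ ihx ihy
  | smul r x hx ih =>
    have e1 : a * (r • x) - (r • x) * a = r • (a * x - x * a) := by
      rw [mul_smul_comm, smul_mul_assoc, ← smul_sub]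
    have e2 : b * (r • x) - (r • x) * b = r • (b * x - x * b) := by
      rw [mul_smul_comm, smul_mul_assoc, ← smul_sub]
    rw [e1, e2, smul_mul_assoc, smul_mul_assoc, ← smul_add]
    exact Submodule.smul_mem _ r ih

end St11Helpers

/-- assuming `MᵢMⱼ ⊆ M_{i+j−1}` for odd `i` and `[A,[A,Mₖ]] ⊆ Mₖ₊₁`,
the element `[b,d][a,m] + [a,d][b,m]` lies in `M_{k+2}` for `m ∈ Mₖ`. -/
theorem stmt11 {K A : Type*} [Field K] [CharZero K] [Ring A] [Algebra K A] (k : ℕ)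
    (h1 : ∀ i j : ℕ, Odd i → ∀ x ∈ lcsM K A i, ∀ y ∈ lcsM K A j, x * y ∈ lcsM K A (i + j - 1))
    (h2 : ∀ j : ℕ, ∀ a b : A, ∀ n ∈ lcsM K A j,
        a * (b * n - n * b) - (b * n - n * b) * a ∈ lcsM K A (j + 1))
    (a b d m : A) (hm : m ∈ lcsM K A k) :
    (b * d - d * b) * (a * m - m * a) + (a * d - d * a) * (b * m - m * b)
      ∈ lcsM K A (k + 2) := by
  obtain _ | (_ | k₂) := k
  · -- k = 0 : target M₂, `T` is a sum of products of two commutators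
    have H1 := st11_mem_lcsM_of' (st11_comm_mem_lcs2 (R := K) b (d * (a * m - m * a)))
    have H2 := st11_mem_lcsM_of (st11_comm_mem_lcs2 (R := K) b (a * m - m * a)) d 1
    have H3 := st11_mem_lcsM_of' (st11_comm_mem_lcs2 (R := K) a (d * (b * m - m * b)))
    have H4 := st11_mem_lcsM_of (st11_comm_mem_lcs2 (R := K) a (b * m - m * b)) d 1
    have HS := add_mem (sub_mem H1 H2) (sub_mem H3 H4)
    have E : (b * d - d * b) * (a * m - m * a) + (a * d - d * a) * (b * m - m * b) = ((b * (d * (a * m - m * a)) - (d * (a * m - m * a)) * b) - d * (b * (a * m - m * a) - (a * m - m * a) * b) * 1) + ((a * (d * (b * m - m * b)) - (d * (b * m - m * b)) * a) - d * (a * (b * m - m * b) - (b * m - m * b) * a) * 1) := by noncomm_ring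
    rw [E]
    exact HS
  · -- k = 1 : target M₃, Feigin–Shoikhet identity
    have H1 := st11_mem_lcsM_of' (st11_comm3_mem_lcs3 (R := K) d a (b * m))
    have H2 := st11_mem_lcsM_of' (st11_comm3_mem_lcs3 (R := K) d b (a * m))
    have H3 := st11_mem_lcsM_of (st11_comm3_mem_lcs3 (R := K) d a m) b 1
    have H4 := st11_mem_lcsM_of (st11_comm3_mem_lcs3 (R := K) d b m) a 1
    have HS := add_mem (add_mem (sub_mem (neg_mem H1) H2) H3) H4
    have E : (b * d - d * b) * (a * m - m * a) + (a * d - d * a) * (b * m - m * b) = -((d * (a * (b * m) - (b * m) * a) - (a * (b * m) - (b * m) * a) * d)) - (d * (b * (a * m) - (a * m) * b) - (b * (a * m) - (a * m) * b) * d) + b * (d * (a * m - m * a) - (a * m - m * a) * d) * 1 + a * (d * (b * m - m * b) - (b * m - m * b) * d) * 1 := by noncomm_ring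
    rw [E]
    exact HS
  · -- k = k₂ + 2
    have hm' : m ∈ Submodule.span K
        {x : A | ∃ p q : A, ∃ l ∈ lcs K A (k₂ + 1 + 1), x = p * l * q} := hm
    clear hm
    induction hm' using Submodule.span_induction with
    | mem z hz =>
      obtain ⟨p, q, l, hl, rfl⟩ := hz
      -- products M₃ · M_{k₂+2} ⊆ M_{k₂+4}
      have h1' : ∀ x ∈ lcsM K A 3, ∀ y ∈ lcsM K A (k₂ + 1 + 1),
          x * y ∈ lcsM K A (k₂ + 1 + 1 + 2) := by
        intro x hx y hy
        have h := h1 3 (k₂ + 1 + 1) ⟨1, by norm_num⟩ x hx y hy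
        have e : 3 + (k₂ + 1 + 1) - 1 = k₂ + 1 + 1 + 2 := by omega
        rwa [e] at h
      -- L_{k₂+4}-terms with multipliers
      have hA : ∀ u v x y : A,
          x * (v * (u * l - l * u) - (u * l - l * u) * v)
            * y ∈ lcsM K A (k₂ + 1 + 1 + 2) := fun u v x y =>
        st11_mem_lcsM_of (st11_mem_lcs_succ (st11_mem_lcs_succ hl u) v) x y
      have H1 := h1' _ (st11_mem_lcsM_of' (st11_comm3_mem_lcs3 d a (b*p))) _
        (st11_mem_lcsM_of hl 1 q)
      have H2 := h1' _ (st11_mem_lcsM_of' (st11_comm3_mem_lcs3 d b (a*p))) _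
        (st11_mem_lcsM_of hl 1 q)
      have H3 := h1' _ (st11_mem_lcsM_of (st11_comm3_mem_lcs3 d a p) b 1) _
        (st11_mem_lcsM_of hl 1 q)
      have H4 := h1' _ (st11_mem_lcsM_of (st11_comm3_mem_lcs3 d b p) a 1) _
        (st11_mem_lcsM_of hl 1 q)
      have H5 := hA a (p*q) (b*d - d*b) 1
      have H6 := hA b (p*q) (a*d - d*a) 1
      have H7 := hA a (b*d - d*b) 1 (p*q)
      have H8 := hA b (a*d - d*a) 1 (p*q)
      have H9 := st11_lcsM_mul_right (st11_lcsM_mul_right (st11_core a b d hl) p) q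
      have H10 := hA q a ((b*d - d*b)*p) 1
      have H11 := hA q b ((a*d - d*a)*p) 1
      have H12 := h1' _ (st11_mem_lcsM_of' (st11_comm3_mem_lcs3 d a (b*q))) _
        (st11_mem_lcsM_of hl p 1)
      have H13 := h1' _ (st11_mem_lcsM_of' (st11_comm3_mem_lcs3 d b (a*q))) _
        (st11_mem_lcsM_of hl p 1)
      have H14 := h1' _ (st11_mem_lcsM_of (st11_comm3_mem_lcs3 d a q) b 1) _
        (st11_mem_lcsM_of hl p 1)
      have H15 := h1' _ (st11_mem_lcsM_of (st11_comm3_mem_lcs3 d b q) a 1) _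
        (st11_mem_lcsM_of hl p 1)
      have H16 := h1' _ (st11_mem_lcsM_of (st11_comm3_mem_lcs3 p a q) (b*d - d*b) 1) _
        (st11_mem_lcsM_of' hl)
      have H17 := h1' _ (st11_mem_lcsM_of (st11_comm3_mem_lcs3 p b q) (a*d - d*a) 1) _
        (st11_mem_lcsM_of' hl)
      have HS := add_mem (add_mem (add_mem (add_mem (sub_mem (sub_mem (sub_mem (sub_mem
        (add_mem (add_mem (add_mem (add_mem (add_mem (add_mem (add_mem (sub_mem
        (neg_mem H1) H2) H3) H4) H5) H6) H7) H8) H9) H10) H11) H12) H13) H14) H15)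
        H16) H17
      have E : (b * d - d * b) * (a * (p * l * q) - p * l * q * a) + (a * d - d * a) * (b * (p * l * q) - p * l * q * b) = -((d * (a * (b * p) - (b * p) * a) - (a * (b * p) - (b * p) * a) * d) * (1 * l * q)) - (d * (b * (a * p) - (a * p) * b) - (b * (a * p) - (a * p) * b) * d) * (1 * l * q) + b * (d * (a * p - p * a) - (a * p - p * a) * d) * 1 * (1 * l * q) + a * (d * (b * p - p * b) - (b * p - p * b) * d) * 1 * (1 * l * q) + (b * d - d * b) * ((p * q) * (a * l - l * a) - (a * l - l * a) * (p * q)) * 1 + (a * d - d * a) * ((p * q) * (b * l - l * b) - (b * l - l * b) * (p * q)) * 1 + 1 * ((b * d - d * b) * (a * l - l * a) - (a * l - l * a) * (b * d - d * b)) * (p * q) + 1 * ((a * d - d * a) * (b * l - l * b) - (b * l - l * b) * (a * d - d * a)) * (p * q) + ((a * l - l * a) * (b * d - d * b) + (b * l - l * b) * (a * d - d * a)) * p * q - ((b * d - d * b) * p) * (a * (q * l - l * q) - (q * l - l * q) * a) * 1 - ((a * d - d * a) * p) * (b * (q * l - l * q) - (q * l - l * q) * b) * 1 - (d * (a * (b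 * q) - (b * q) * a) - (a * (b * q) - (b * q) * a) * d) * (p * l * 1) - (d * (b * (a * q) - (a * q) * b) - (b * (a * q) - (a * q) * b) * d) * (p * l * 1) + b * (d * (a * q - q * a) - (a * q - q * a) * d) * 1 * (p * l * 1) + a * (d * (b * q - q * b) - (b * q - q * b) * d) * 1 * (p * l * 1) + (b * d - d * b) * (p * (a * q - q * a) - (a * q - q * a) * p) * 1 * l + (a * d - d * a) * (p * (b * q - q * b) - (b * q - q * b) * p) * 1 * l := by noncomm_ring
      rw [E]
      exact HS
    | zero => simp
    | add x y hx hy ihx ihy =>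
      have E : (b * d - d * b) * (a * (x + y) - (x + y) * a)
          + (a * d - d * a) * (b * (x + y) - (x + y) * b)
          = ((b * d - d * b) * (a * x - x * a) + (a * d - d * a) * (b * x - x * b))
          + ((b * d - d * b) * (a * y - y * a) + (a * d - d * a) * (b * y - y * b)) := by
        noncomm_ring
      rw [E]; exact Submodule.add_mem _ ihx ihy
    | smul r x hx ih =>
      have e1 : a * (r • x) - (r • x) * a = r • (a * x - x * a) := by
        rw [mul_smul_comm, smul_mul_assoc, ← smul_sub]
      have e2 : b * (r • x) - (r • x) * b = r • (b * x - x * b) := by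
        rw [mul_smul_comm, smul_mul_assoc, ← smul_sub]
      rw [e1, e2, mul_smul_comm, mul_smul_comm, ← smul_add]
      exact Submodule.smul_mem _ r ih
end

section
/- Let A = k⟨x,y⟩/(y²) be the free algebra on two generators modulo the relation y² = 0, over a field k of characteristic zero. Then the elements [xˡ, y] for l ≥ 1 are linearly independent in N₂(A) = M₂(A)/M₃(A); in particular N₂(A) is infinite-dimensional. -/
open Submodule

variable (K : Type*) (A : Type*)

/-- The relation imposing `y² = 0` on the free algebra on two generators. -/
def relY2 (K : Type*) [Field K] (a b : FreeAlgebra K Bool) : Prop :=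
  a = FreeAlgebra.ι K true * FreeAlgebra.ι K true ∧ b = 0


namespace Stmt13Aux

variable (K : Type*) [Field K]

/-- Grassmann-type algebra: k[X] ⊗ Λ(θ₁,θ₂), with basis 1, θ₁, θ₂, θ₁θ₂ over k[X]. -/
@[ext] structure Gr where
  a : Polynomial K
  b : Polynomial K
  c : Polynomial K
  d : Polynomial K

namespace Gr

variable {K}

noncomputable instance : Zero (Gr K) := ⟨⟨0,0,0,0⟩⟩
noncomputable instance : Add (Gr K) := ⟨fun p q => ⟨p.a+q.a, p.b+q.b, p.c+q.c, p.d+q.d⟩⟩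
noncomputable instance : Neg (Gr K) := ⟨fun p => ⟨-p.a, -p.b, -p.c, -p.d⟩⟩
noncomputable instance : SMul K (Gr K) := ⟨fun r p => ⟨r • p.a, r • p.b, r • p.c, r • p.d⟩⟩
noncomputable instance : One (Gr K) := ⟨⟨1,0,0,0⟩⟩
noncomputable instance : Mul (Gr K) :=
  ⟨fun p q => ⟨p.a*q.a, p.a*q.b + p.b*q.a, p.a*q.c + p.c*q.a,
    p.a*q.d + p.d*q.a + p.b*q.c - p.c*q.b⟩⟩

@[simp] lemma zero_a : (0 : Gr K).a = 0 := rfl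
@[simp] lemma zero_b : (0 : Gr K).b = 0 := rfl
@[simp] lemma zero_c : (0 : Gr K).c = 0 := rfl
@[simp] lemma zero_d : (0 : Gr K).d = 0 := rfl
@[simp] lemma one_a : (1 : Gr K).a = 1 := rfl
@[simp] lemma one_b : (1 : Gr K).b = 0 := rfl
@[simp] lemma one_c : (1 : Gr K).c = 0 := rfl
@[simp] lemma one_d : (1 : Gr K).d = 0 := rfl
@[simp] lemma add_a (p q : Gr K) : (p+q).a = p.a+q.a := rfl
@[simp] lemma add_b (p q : Gr K) : (p+q).b = p.b+q.b := rfl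
@[simp] lemma add_c (p q : Gr K) : (p+q).c = p.c+q.c := rfl
@[simp] lemma add_d (p q : Gr K) : (p+q).d = p.d+q.d := rfl
@[simp] lemma neg_a (p : Gr K) : (-p).a = -p.a := rfl
@[simp] lemma neg_b (p : Gr K) : (-p).b = -p.b := rfl
@[simp] lemma neg_c (p : Gr K) : (-p).c = -p.c := rfl
@[simp] lemma neg_d (p : Gr K) : (-p).d = -p.d := rfl
@[simp] lemma smul_a (r : K) (p : Gr K) : (r • p).a = r • p.a := rfl
@[simp] lemma smul_b (r : K) (p : Gr K) : (r • p).b = r • p.b := rfl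
@[simp] lemma smul_c (r : K) (p : Gr K) : (r • p).c = r • p.c := rfl
@[simp] lemma smul_d (r : K) (p : Gr K) : (r • p).d = r • p.d := rfl
@[simp] lemma mul_a (p q : Gr K) : (p*q).a = p.a*q.a := rfl
@[simp] lemma mul_b (p q : Gr K) : (p*q).b = p.a*q.b + p.b*q.a := rfl
@[simp] lemma mul_c (p q : Gr K) : (p*q).c = p.a*q.c + p.c*q.a := rfl
@[simp] lemma mul_d (p q : Gr K) : (p*q).d = p.a*q.d + p.d*q.a + p.b*q.c - p.c*q.b := rfl

noncomputable instance : AddCommGroup (Gr K) where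
  add_assoc p q r := by ext : 1 <;> simp <;> ring
  zero_add p := by ext : 1 <;> simp
  add_zero p := by ext : 1 <;> simp
  add_comm p q := by ext : 1 <;> simp <;> ring
  neg_add_cancel p := by ext : 1 <;> simp
  nsmul := nsmulRec
  zsmul := zsmulRec

noncomputable instance : Ring (Gr K) where
  __ := (inferInstance : AddCommGroup (Gr K))
  mul_assoc p q r := by ext : 1 <;> simp <;> ring
  one_mul p := by ext : 1 <;> simp
  mul_one p := by ext : 1 <;> simp
  left_distrib p q r := by ext : 1 <;> simp <;> ring
  right_distrib p q r := by ext : 1 <;> simp <;> ring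
  zero_mul p := by ext : 1 <;> simp
  mul_zero p := by ext : 1 <;> simp


@[simp] lemma sub_a (p q : Gr K) : (p-q).a = p.a-q.a := by
  rw [sub_eq_add_neg, sub_eq_add_neg]; rfl
@[simp] lemma sub_b (p q : Gr K) : (p-q).b = p.b-q.b := by
  rw [sub_eq_add_neg, sub_eq_add_neg]; rfl
@[simp] lemma sub_c (p q : Gr K) : (p-q).c = p.c-q.c := by
  rw [sub_eq_add_neg, sub_eq_add_neg]; rfl
@[simp] lemma sub_d (p q : Gr K) : (p-q).d = p.d-q.d := by
  rw [sub_eq_add_neg, sub_eq_add_neg]; rfl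

noncomputable instance : Module K (Gr K) where
  one_smul p := by ext : 1 <;> simp
  mul_smul r s p := by ext : 1 <;> simp [mul_smul]
  smul_zero r := by ext : 1 <;> simp
  smul_add r p q := by ext : 1 <;> simp
  add_smul r s p := by ext : 1 <;> simp [add_smul]
  zero_smul p := by ext : 1 <;> simp

noncomputable instance : Algebra K (Gr K) :=
  Algebra.ofModule
    (fun r p q => by ext : 1 <;> simp [Polynomial.smul_eq_C_mul] <;> ring)
    (fun r p q => by ext : 1 <;> simp [Polynomial.smul_eq_C_mul] <;> ring)

end Gr

end Stmt13Aux
namespace Stmt13Aux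

variable {K : Type*} [Field K]

open Polynomial

/-- x ↦ X + θ₁ -/
noncomputable def xG : Gr K := ⟨Polynomial.X, 1, 0, 0⟩
/-- y ↦ θ₂ -/
noncomputable def yG : Gr K := ⟨0, 0, 1, 0⟩

lemma yG_sq : (yG : Gr K) * yG = 0 := by
  ext : 1 <;> simp [yG]

/-- the free-algebra map -/
noncomputable def f0 : FreeAlgebra K Bool →ₐ[K] Gr K :=
  FreeAlgebra.lift K (fun t => if t then yG else xG)

lemma f0_rel : ∀ ⦃x y : FreeAlgebra K Bool⦄, relY2 K x y → (f0 : FreeAlgebra K Bool →ₐ[K] Gr K) x = f0 y := by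
  rintro x y ⟨rfl, rfl⟩
  simp [f0, yG_sq]

/-- the map A = k⟨x,y⟩/(y²) → Gr -/
noncomputable def Φ : RingQuot (relY2 K) →ₐ[K] Gr K :=
  RingQuot.liftAlgHom K ⟨f0, f0_rel⟩

lemma Φ_mk (z : FreeAlgebra K Bool) :
    (Φ : RingQuot (relY2 K) →ₐ[K] Gr K) (RingQuot.mkRingHom (relY2 K) z) = f0 z := by
  rw [← RingQuot.mkAlgHom_coe K]
  exact RingQuot.liftAlgHom_mkAlgHom_apply K f0 f0_rel z

@[simp] lemma Φ_x : (Φ : RingQuot (relY2 K) →ₐ[K] Gr K)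
    (RingQuot.mkRingHom (relY2 K) (FreeAlgebra.ι K false)) = xG := by
  rw [Φ_mk]; simp [f0]

@[simp] lemma Φ_y : (Φ : RingQuot (relY2 K) →ₐ[K] Gr K)
    (RingQuot.mkRingHom (relY2 K) (FreeAlgebra.ι K true)) = yG := by
  rw [Φ_mk]; simp [f0]

/-- the submodule of "top degree" elements of Gr -/
noncomputable def Zd : Submodule K (Gr K) where
  carrier := {p | p.a = 0 ∧ p.b = 0 ∧ p.c = 0}
  add_mem' := by rintro p q ⟨h1,h2,h3⟩ ⟨h4,h5,h6⟩; refine ⟨?_,?_,?_⟩ <;> simp_all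
  zero_mem' := ⟨rfl, rfl, rfl⟩
  smul_mem' := by rintro r p ⟨h1,h2,h3⟩; refine ⟨?_,?_,?_⟩ <;> simp_all

lemma comm_mem_Zd (u v : Gr K) : u*v - v*u ∈ Zd := by
  refine ⟨?_,?_,?_⟩ <;> simp <;> ring

lemma Zd_central {z : Gr K} (hz : z ∈ Zd) (u : Gr K) : u*z - z*u = 0 := by
  obtain ⟨h1,h2,h3⟩ := hz
  ext : 1 <;> simp [h1,h2,h3] <;> ring

lemma lcs2_maps : ∀ z ∈ lcs K (RingQuot (relY2 K)) 2,
    (Φ : RingQuot (relY2 K) →ₐ[K] Gr K) z ∈ Zd := by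
  intro z hz
  have : lcs K (RingQuot (relY2 K)) 2 ≤ Zd.comap (Φ.toLinearMap : RingQuot (relY2 K) →ₗ[K] Gr K) := by
    rw [show lcs K (RingQuot (relY2 K)) 2 = Submodule.span K
      {x : RingQuot (relY2 K) | ∃ a : RingQuot (relY2 K), ∃ l ∈ lcs K (RingQuot (relY2 K)) 1, x = a * l - l * a} from rfl]
    apply Submodule.span_le.mpr
    rintro x ⟨a, l, -, rfl⟩
    simp only [SetLike.mem_coe, Submodule.mem_comap, AlgHom.toLinearMap_apply, map_sub, map_mul]
    exact comm_mem_Zd _ _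
  exact this hz

lemma lcs3_maps : ∀ z ∈ lcs K (RingQuot (relY2 K)) 3,
    (Φ : RingQuot (relY2 K) →ₐ[K] Gr K) z = 0 := by
  intro z hz
  have : lcs K (RingQuot (relY2 K)) 3 ≤
      LinearMap.ker (Φ.toLinearMap : RingQuot (relY2 K) →ₗ[K] Gr K) := by
    rw [show lcs K (RingQuot (relY2 K)) 3 = Submodule.span K
      {x : RingQuot (relY2 K) | ∃ a : RingQuot (relY2 K), ∃ l ∈ lcs K (RingQuot (relY2 K)) 2, x = a * l - l * a} from rfl]
    apply Submodule.span_le.mpr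
    rintro x ⟨a, l, hl, rfl⟩
    simp only [SetLike.mem_coe, LinearMap.mem_ker, AlgHom.toLinearMap_apply, map_sub, map_mul]
    exact Zd_central (lcs2_maps l hl) _
  exact this hz

lemma lcsM3_maps : ∀ z ∈ lcsM K (RingQuot (relY2 K)) 3,
    (Φ : RingQuot (relY2 K) →ₐ[K] Gr K) z = 0 := by
  intro z hz
  have : lcsM K (RingQuot (relY2 K)) 3 ≤
      LinearMap.ker (Φ.toLinearMap : RingQuot (relY2 K) →ₗ[K] Gr K) := by
    apply Submodule.span_le.mpr
    rintro x ⟨p, q, l, hl, rfl⟩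
    simp only [SetLike.mem_coe, LinearMap.mem_ker, AlgHom.toLinearMap_apply, map_mul]
    rw [lcs3_maps l hl]
    simp
  exact this hz

end Stmt13Aux

namespace Stmt13Aux

variable {K : Type*} [Field K] [CharZero K]

open Polynomial

lemma xG_pow (m : ℕ) : (xG : Gr K)^(m+1) = ⟨X^(m+1), (m+1 : Polynomial K) * X^m, 0, 0⟩ := by
  induction m with
  | zero => ext : 1 <;> simp [xG]
  | succ m ih =>
      rw [pow_succ, ih]
      ext : 1 <;> simp [xG] <;> push_cast <;> ring

/-- the abbreviation for the commutators [x^(l+1), y] in A -/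
noncomputable def v (l : ℕ) : RingQuot (relY2 K) :=
  (RingQuot.mkRingHom (relY2 K) (FreeAlgebra.ι K false)) ^ (l + 1)
      * RingQuot.mkRingHom (relY2 K) (FreeAlgebra.ι K true)
    - RingQuot.mkRingHom (relY2 K) (FreeAlgebra.ι K true)
      * (RingQuot.mkRingHom (relY2 K) (FreeAlgebra.ι K false)) ^ (l + 1)

lemma Φ_v (l : ℕ) : (Φ : RingQuot (relY2 K) →ₐ[K] Gr K) (v l) =
    ⟨0, 0, 0, Polynomial.C (2*((l:K)+1)) * X^l⟩ := by
  simp only [v, map_sub, map_mul, map_pow, Φ_x, Φ_y, xG_pow]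
  ext : 1 <;> simp [yG] <;> push_cast [map_ofNat] <;> ring

/-- d-component as a linear map -/
noncomputable def dL : Gr K →ₗ[K] Polynomial K where
  toFun p := p.d
  map_add' p q := rfl
  map_smul' r p := rfl

lemma poly_indep : LinearIndependent K
    (fun l : ℕ => Polynomial.C (2*((l:K)+1)) * X^l) := by
  rw [linearIndependent_iff']
  intro s g h i hi
  have h2 := congrArg (fun p => Polynomial.coeff p i) h
  simp only [Polynomial.finset_sum_coeff, Polynomial.coeff_smul, Polynomial.coeff_C_mul,
    Polynomial.coeff_X_pow, Polynomial.coeff_zero, smul_eq_mul, mul_ite, mul_one, mul_zero] at h2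
  rw [Finset.sum_eq_single_of_mem i hi (by intro j _ hj; simp [Ne.symm hj])] at h2
  simp only [if_pos, if_true] at h2
  have hne : (2*((i:K)+1)) ≠ 0 := by
    have : ((2*(i+1) : ℕ) : K) ≠ 0 := Nat.cast_ne_zero.mpr (by omega)
    push_cast at this
    convert this using 2 <;> push_cast <;> ring
  exact (mul_eq_zero.mp h2).resolve_right hne

lemma lcsM3_le_ker : lcsM K (RingQuot (relY2 K)) 3 ≤
    LinearMap.ker ((Φ : RingQuot (relY2 K) →ₐ[K] Gr K).toLinearMap) := by
  intro z hz
  simpa using lcsM3_maps z hz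

/-- the induced map A/M₃ → Gr -/
noncomputable def Tbar : (RingQuot (relY2 K) ⧸ lcsM K (RingQuot (relY2 K)) 3) →ₗ[K] Gr K :=
  Submodule.liftQ _ (Φ.toLinearMap) lcsM3_le_ker

lemma main_indep : LinearIndependent K (fun l : ℕ =>
    (lcsM K (RingQuot (relY2 K)) 3).mkQ (v l : RingQuot (relY2 K))) := by
  apply LinearIndependent.of_comp (dL ∘ₗ (Tbar : (RingQuot (relY2 K) ⧸ lcsM K (RingQuot (relY2 K)) 3) →ₗ[K] Gr K))
  have : (dL ∘ₗ (Tbar : (RingQuot (relY2 K) ⧸ lcsM K (RingQuot (relY2 K)) 3) →ₗ[K] Gr K)) ∘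
      (fun l : ℕ => (lcsM K (RingQuot (relY2 K)) 3).mkQ (v l : RingQuot (relY2 K)))
      = fun l : ℕ => Polynomial.C (2*((l:K)+1)) * X^l := by
    funext l
    simp only [Function.comp_apply, LinearMap.comp_apply, Submodule.mkQ_apply, Tbar,
      Submodule.liftQ_apply, AlgHom.toLinearMap_apply, Φ_v]
    rfl
  rw [this]
  exact poly_indep

end Stmt13Aux

set_option maxHeartbeats 1000000 in
/-- in `A = k⟨x,y⟩/(y²)`, the classes of `[xˡ, y]`, `l ≥ 1`, are linearly
independent in `N₂(A) = M₂(A)/M₃(A)` (viewed inside `A/M₃`); in particular `N₂(A)` is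
infinite dimensional. -/
theorem stmt13 {K : Type*} [Field K] [CharZero K] :
    (LinearIndependent K fun l : ℕ =>
      (lcsM K (RingQuot (relY2 K)) 3).mkQ
        ((RingQuot.mkRingHom (relY2 K) (FreeAlgebra.ι K false)) ^ (l + 1)
            * RingQuot.mkRingHom (relY2 K) (FreeAlgebra.ι K true)
          - RingQuot.mkRingHom (relY2 K) (FreeAlgebra.ι K true)
            * (RingQuot.mkRingHom (relY2 K) (FreeAlgebra.ι K false)) ^ (l + 1)))
    ∧ ¬ Module.Finite K
        (@HasQuotient.Quotient _ _
          (@Submodule.hasQuotient K _ _ (lcsM K (RingQuot (relY2 K)) 2).addCommGroup _)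
          (Submodule.comap (lcsM K (RingQuot (relY2 K)) 2).subtype
            (lcsM K (RingQuot (relY2 K)) 3))) := by
  classical
  refine ⟨Stmt13Aux.main_indep, ?_⟩
  intro hfin
  set A' := RingQuot (relY2 K)
  set M2 := lcsM K A' 2 with hM2
  set M3 := lcsM K A' 3 with hM3
  have hv2 : ∀ l : ℕ, Stmt13Aux.v l ∈ M2 := by
    intro l
    have h1 : (Stmt13Aux.v l : A') ∈ lcs K A' 2 := by
      rw [show lcs K A' 2 = Submodule.span K
        {x : A' | ∃ a : A', ∃ m ∈ lcs K A' 1, x = a * m - m * a} from rfl]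
      exact Submodule.subset_span
        ⟨(RingQuot.mkRingHom (relY2 K) (FreeAlgebra.ι K false)) ^ (l + 1),
         RingQuot.mkRingHom (relY2 K) (FreeAlgebra.ι K true),
         Submodule.mem_top, rfl⟩
    exact Submodule.subset_span ⟨1, 1, Stmt13Aux.v l, h1, by rw [one_mul, mul_one]⟩
  letI : AddCommGroup ↥M2 := M2.addCommGroup
  set Q := (@HasQuotient.Quotient _ _ (@Submodule.hasQuotient K _ _ M2.addCommGroup _)
    (Submodule.comap M2.subtype M3))
  let w : ℕ → Q := fun l => Submodule.Quotient.mk ⟨Stmt13Aux.v l, hv2 l⟩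
  let g : Q →ₗ[K] (A' ⧸ M3) :=
    Submodule.liftQ (Submodule.comap M2.subtype M3) (M3.mkQ ∘ₗ M2.subtype)
      (by
        intro z hz
        simp only [LinearMap.mem_ker, LinearMap.comp_apply, Submodule.subtype_apply,
          Submodule.mkQ_apply, Submodule.Quotient.mk_eq_zero]
        exact hz)
  have hw : LinearIndependent K w := by
    apply LinearIndependent.of_comp g
    have hgw : g ∘ w = fun l : ℕ => M3.mkQ (Stmt13Aux.v l) := by
      funext l
      show Submodule.liftQ _ _ _ (Submodule.Quotient.mk _) = _
      rw [Submodule.liftQ_apply]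
      rfl
    rw [hgw]
    exact Stmt13Aux.main_indep
  exact Module.Finite.not_linearIndependent_of_infinite w hw
end
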